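/- Let G be an MVR chain graph with vertex set V and chain components 𝒯, and let p be a strictly positive probability mass function on a finite product space ∏_{v ∈ V} S_v. If p obeys the global Markov property for G (for all pairwise disjoint X, Y, Z ⊆ V with X, Y nonempty, whenever X and Y are m-separated given Z in G, the coordinate tuples X_X and X_Y are conditionally independent given X_Z under p), then p factorizes over the chain components with their graphical parents: for every x ∈ ∏_{v∈V} S_v, p(x) = ∏_{T ∈ 𝒯} p_{T ∪ pa_G(T)}(x) / p_{pa_G(T)}(x), where p_A denotes the marginal of p on the coordinates in A. -/

import Mathlib

open scoped Classical

universe u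

variable {V : Type u}

/-- A mixed graph: a set of directed edges and a set of bidirected edges on `V`. -/
structure MixedGraph (V : Type u) where
  /-- `dir u v` means there is a directed edge `u → v`. -/
  dir : V → V → Prop
  /-- `bi u v` means there is a bidirected edge `u ↔ v`. -/
  bi : V → V → Prop

namespace MixedGraph

/-- The basic well-formedness conditions of a mixed graph with only directed and
bidirected edges: `bi` is symmetric and irreflexive, `dir` is irreflexive, there are no
self-loops and at most one edge between each pair of distinct vertices. -/
def IsMixed (G : MixedGraph V) : Prop :=
  (∀ u v, G.bi u v → G.bi v u) ∧
  (∀ v, ¬ G.bi v v) ∧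
  (∀ v, ¬ G.dir v v) ∧
  (∀ u v, G.dir u v → ¬ G.bi u v) ∧
  (∀ u v, G.dir u v → ¬ G.dir v u)

/-- A partially directed cycle: vertices `f 0, f 1, …, f n = f 0` (`n ≥ 2`,
`f 0, …, f (n-1)` distinct) such that every step is a directed edge `f i → f (i+1)` or a
bidirected edge, and at least one step is directed. -/
def HasPDCycle (G : MixedGraph V) : Prop :=
  ∃ (n : ℕ) (f : ℕ → V), 2 ≤ n ∧ f n = f 0 ∧
    (∀ i j, i < n → j < n → f i = f j → i = j) ∧
    (∀ i, i < n → G.dir (f i) (f (i + 1)) ∨ G.bi (f i) (f (i + 1))) ∧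
    (∃ i, i < n ∧ G.dir (f i) (f (i + 1)))

/-- An MVR chain graph: a mixed graph containing only directed and bidirected edges and
having no partially directed cycle. -/
def IsMVR (G : MixedGraph V) : Prop := G.IsMixed ∧ ¬ G.HasPDCycle

/-- `G.anc u v` : `u` is an ancestor of `v` (`u = v` or there is a directed path
`u → ⋯ → v`). -/
def anc (G : MixedGraph V) (u v : V) : Prop := Relation.ReflTransGen G.dir u v

/-- `an(S)`: the set of ancestors of members of `S`. -/
def ancSet (G : MixedGraph V) (S : Set V) : Set V := {u | ∃ s ∈ S, G.anc u s}

/-- The descendants of `v`. -/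
def de (G : MixedGraph V) (v : V) : Set V := {u | G.anc v u}

/-- The non-descendants of `v` : `V \ (de(v) ∪ {v})`. -/
def nd (G : MixedGraph V) (v : V) : Set V := {u | ¬ G.anc v u}

/-- Adjacency: some edge joins `u` and `v`. -/
def adj (G : MixedGraph V) (u v : V) : Prop := G.dir u v ∨ G.dir v u ∨ G.bi u v

/-- `f 0, …, f n` is a walk: consecutive vertices are joined by some edge. -/
def IsWalk (G : MixedGraph V) (n : ℕ) (f : ℕ → V) : Prop :=
  ∀ i, i < n → G.adj (f i) (f (i + 1))

/-- `f 0, …, f n` is a path: a walk with distinct vertices. -/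
def IsPath (G : MixedGraph V) (n : ℕ) (f : ℕ → V) : Prop :=
  G.IsWalk n f ∧ ∀ i j, i ≤ n → j ≤ n → f i = f j → i = j

/-- The nonendpoint vertex `f i` (`0 < i < n`) of a path is a collider: both incident
edges of the path have an arrowhead at `f i`, i.e. the edge from `f (i-1)` is
`f (i-1) → f i` or `f (i-1) ↔ f i`, and the edge to `f (i+1)` is `f i ← f (i+1)` or
`f i ↔ f (i+1)`. -/
def IsColliderAt (G : MixedGraph V) (f : ℕ → V) (i : ℕ) : Prop :=
  (G.dir (f (i - 1)) (f i) ∨ G.bi (f (i - 1)) (f i)) ∧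
  (G.dir (f (i + 1)) (f i) ∨ G.bi (f i) (f (i + 1)))

/-- A path between `α` and `β` is m-connecting given `Z` if every noncollider on it is
not in `Z` and every collider on it is in `an(Z)`. -/
def MConnecting (G : MixedGraph V) (Z : Set V) (α β : V) : Prop :=
  ∃ (n : ℕ) (f : ℕ → V), G.IsPath n f ∧ f 0 = α ∧ f n = β ∧
    ∀ i, 0 < i → i < n →
      (G.IsColliderAt f i → f i ∈ G.ancSet Z) ∧ (¬ G.IsColliderAt f i → f i ∉ Z)

/-- `X` and `Y` are m-separated given `Z`: no m-connecting path given `Z` joins a vertex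
of `X` to a vertex of `Y`. -/
def MSep (G : MixedGraph V) (X Y Z : Set V) : Prop :=
  ∀ α ∈ X, ∀ β ∈ Y, ¬ G.MConnecting Z α β

/-- The induced subgraph of `G` on the vertex set `A` (kept on the same vertex type:
only edges with both endpoints in `A` remain). -/
def induce (G : MixedGraph V) (A : Set V) : MixedGraph V where
  dir u v := u ∈ A ∧ v ∈ A ∧ G.dir u v
  bi u v := u ∈ A ∧ v ∈ A ∧ G.bi u v

/-- Two vertices are collider connected if joined by a path on which every nonendpoint
vertex is a collider (a single edge counts). -/
def ColliderConnected (G : MixedGraph V) (x y : V) : Prop :=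
  ∃ (n : ℕ) (f : ℕ → V), 1 ≤ n ∧ G.IsPath n f ∧ f 0 = x ∧ f n = y ∧
    ∀ i, 0 < i → i < n → G.IsColliderAt f i

end MixedGraph

/-- `Z` separates `X` from `Y` in the undirected graph with adjacency `E` : every path
from `X` to `Y` meets `Z`. -/
def UndirSep {V : Type u} (E : V → V → Prop) (X Y Z : Set V) : Prop :=
  ∀ (n : ℕ) (f : ℕ → V), (∀ i, i < n → E (f i) (f (i + 1))) →
    (∀ i j, i ≤ n → j ≤ n → f i = f j → i = j) →
    f 0 ∈ X → f n ∈ Y → ∃ i, i ≤ n ∧ f i ∈ Z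

namespace MixedGraph

/-- Augmented-graph separation (m*-separation): `Z` separates `X` from `Y` in the
augmented graph (whose edges join the collider-connected pairs) of the induced subgraph
of `G` on `an(X ∪ Y ∪ Z)`. -/
def AugSep (G : MixedGraph V) (X Y Z : Set V) : Prop :=
  UndirSep (fun a b => (G.induce (G.ancSet (X ∪ Y ∪ Z))).ColliderConnected a b) X Y Z

/-- Connectivity in the bidirected part of `G`. -/
def biConn (G : MixedGraph V) (u v : V) : Prop := Relation.ReflTransGen G.bi u v

/-- The chain component of `v`: the connected component of `v` in the bidirected part. -/
def chainComp (G : MixedGraph V) (v : V) : Set V := {u | G.biConn v u}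

/-- `T` is a chain component of `G`. -/
def IsChainComp (G : MixedGraph V) (T : Set V) : Prop := ∃ v, T = G.chainComp v

/-- The parents of a vertex: `pa_G(v) = {w : w → v}`. -/
def pa (G : MixedGraph V) (v : V) : Set V := {w | G.dir w v}

/-- The boundary of a vertex: parents and bidirected neighbours. -/
def bd (G : MixedGraph V) (v : V) : Set V := {w | G.dir w v ∨ G.bi w v}

/-- The parents of a set: `pa_G(A) = {w ∉ A : w → v for some v ∈ A}`. -/
def paSet (G : MixedGraph V) (A : Set V) : Set V := {w | w ∉ A ∧ ∃ v ∈ A, G.dir w v}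

/-- `Nb_G(A)`: `A` together with all vertices joined to `A` by a bidirected edge. -/
def Nb (G : MixedGraph V) (A : Set V) : Set V := A ∪ {w | ∃ v ∈ A, G.bi w v}

/-- The edge relation of the directed graph `D` of chain components:
`C₁ → C₂` iff they are distinct chain components and some directed edge of `G` joins a
vertex of `C₁` to a vertex of `C₂`. -/
def compRel (G : MixedGraph V) (C₁ C₂ : Set V) : Prop :=
  G.IsChainComp C₁ ∧ G.IsChainComp C₂ ∧ C₁ ≠ C₂ ∧ ∃ u ∈ C₁, ∃ v ∈ C₂, G.dir u v

/-- `pa_D(T)`: the union of the chain components that are parents of `T` in the directed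
graph `D` of chain components. -/
def paD (G : MixedGraph V) (T : Set V) : Set V := {w | G.compRel (G.chainComp w) T}

/-- `nd_D(T)`: the union of the chain components `T'` such that there is no directed path
from `T` to `T'` in the directed graph `D` of chain components. -/
def ndD (G : MixedGraph V) (T : Set V) : Set V :=
  {w | ¬ Relation.ReflTransGen G.compRel T (G.chainComp w)}

/-- Connectivity in the bidirected part of the induced subgraph on `A`. -/
def biConnIn (G : MixedGraph V) (A : Set V) (u v : V) : Prop :=
  Relation.ReflTransGen (fun a b => a ∈ A ∧ b ∈ A ∧ G.bi a b) u v

/-- `A` is connected: the bidirected part of the induced subgraph on `A` is connected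
(and `A` is nonempty). -/
def ConnectedIn (G : MixedGraph V) (A : Set V) : Prop :=
  A.Nonempty ∧ ∀ u ∈ A, ∀ v ∈ A, G.biConnIn A u v

/-- `dis_{G_A}(x)`: the connected component (district) of `x` in the bidirected part of
the induced subgraph `G_A`. -/
def disIn (G : MixedGraph V) (A : Set V) (x : V) : Set V := {y | G.biConnIn A x y}

/-- The Markov blanket `mb(x, A) = pa_G(dis_{G_A}(x)) ∪ (dis_{G_A}(x) \ {x})`. -/
def mb (G : MixedGraph V) (x : V) (A : Set V) : Set V :=
  G.paSet (G.disIn A x) ∪ (G.disIn A x \ {x})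

/-- `pre(T)` relative to an order `r` on chain components: the union of all chain
components strictly preceding `T`. -/
def pre (G : MixedGraph V) (r : Set V → Set V → Prop) (T : Set V) : Set V :=
  {v | r (G.chainComp v) T}

/-- `r` is a strict total order on the chain components of `G` that is consistent with
the directed graph `D` of chain components, i.e. `pa_D(T) ⊆ pre(T)` for all `T`. -/
def ConsistentCompOrder (G : MixedGraph V) (r : Set V → Set V → Prop) : Prop :=
  (∀ C, ¬ r C C) ∧
  (∀ C₁ C₂ C₃, r C₁ C₂ → r C₂ C₃ → r C₁ C₃) ∧
  (∀ C₁ C₂, G.IsChainComp C₁ → G.IsChainComp C₂ → C₁ = C₂ ∨ r C₁ C₂ ∨ r C₂ C₁) ∧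
  (∀ T, G.IsChainComp T → G.paD T ⊆ G.pre r T)

/-- A total order `r` on the vertices of `G` is consistent with `G` if `r x y` implies
that `y` is not an ancestor of `x`. -/
def ConsistentVertexOrder (G : MixedGraph V) (r : V → V → Prop) : Prop :=
  IsStrictTotalOrder V r ∧ ∀ x y, r x y → ¬ G.anc y x

end MixedGraph

section IndepModel

variable {V : Type u} (I : Set V → Set V → Set V → Prop)

/-- Symmetry: `X ⫫ Y | Z  ⇒  Y ⫫ X | Z`. -/
def IndepSymm : Prop := ∀ X Y Z : Set V, I X Y Z → I Y X Z

/-- Decomposition: `X ⫫ Y ∪ W | Z  ⇒  X ⫫ Y | Z`. -/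
def IndepDecomp : Prop := ∀ X Y W Z : Set V, I X (Y ∪ W) Z → I X Y Z

/-- Weak union: `X ⫫ Y ∪ W | Z  ⇒  X ⫫ Y | Z ∪ W`. -/
def IndepWeakUnion : Prop := ∀ X Y W Z : Set V, I X (Y ∪ W) Z → I X Y (Z ∪ W)

/-- Contraction: `X ⫫ Y | Z ∪ W` and `X ⫫ W | Z` imply `X ⫫ Y ∪ W | Z`. -/
def IndepContraction : Prop := ∀ X Y W Z : Set V, I X Y (Z ∪ W) → I X W Z → I X (Y ∪ W) Z

/-- Composition: `X ⫫ Y | Z` and `X ⫫ W | Z` imply `X ⫫ Y ∪ W | Z`. -/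
def IndepComposition : Prop := ∀ X Y W Z : Set V, I X Y Z → I X W Z → I X (Y ∪ W) Z

/-- A semi-graphoid satisfies symmetry, decomposition, weak union and contraction. -/
def SemiGraphoid : Prop := IndepSymm I ∧ IndepDecomp I ∧ IndepWeakUnion I ∧ IndepContraction I

/-- A compositional semi-graphoid additionally satisfies composition. -/
def CompositionalSemiGraphoid : Prop := SemiGraphoid I ∧ IndepComposition I

variable (G : MixedGraph V)

/-- The global Markov property via m-separation: whenever `X` and `Y` are m-separated
given `Z` in `G` (for pairwise disjoint `X, Y, Z` with `X, Y` nonempty), `⟨X, Y | Z⟩ ∈ ℐ`. -/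
def GlobalMarkovM : Prop :=
  ∀ X Y Z : Set V, X.Nonempty → Y.Nonempty →
    Disjoint X Y → Disjoint X Z → Disjoint Y Z → G.MSep X Y Z → I X Y Z

/-- The global Markov property via augmented-graph separation: whenever `Z` separates `X`
from `Y` in the augmented graph of the induced subgraph of `G` on `an(X ∪ Y ∪ Z)` (for
pairwise disjoint `X, Y, Z` with `X, Y` nonempty), `⟨X, Y | Z⟩ ∈ ℐ`. -/
def GlobalMarkovAug : Prop :=
  ∀ X Y Z : Set V, X.Nonempty → Y.Nonempty →
    Disjoint X Y → Disjoint X Z → Disjoint Y Z → G.AugSep X Y Z → I X Y Z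

/-- The block-recursive Markov property of type IV. -/
def TypeIVMarkov : Prop :=
  ∀ T : Set V, G.IsChainComp T →
    (I T (G.ndD T \ G.paD T) (G.paD T)) ∧
    (∀ A : Set V, A ⊆ T → I A (G.paD T \ G.paSet A) (G.paSet A)) ∧
    (∀ A : Set V, A ⊆ T → G.ConnectedIn A → I A (T \ G.Nb A) (G.paD T))

/-- The multivariate regression (MR) Markov property with respect to the order `r` on the
chain components: (MR1) for connected `A ⊆ T`, `A ⫫ pre(T) \ pa_G(A) | pa_G(A)`; (MR2)
distinct connected components `A₁, A₂` of `A ⊆ T` satisfy `A₁ ⫫ A₂ | pre(T)`. -/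
def MRMarkov (r : Set V → Set V → Prop) : Prop :=
  ∀ T : Set V, G.IsChainComp T → ∀ A : Set V, A ⊆ T →
    (G.ConnectedIn A → I A (G.pre r T \ G.paSet A) (G.paSet A)) ∧
    (∀ x ∈ A, ∀ y ∈ A, G.disIn A x ≠ G.disIn A y →
      I (G.disIn A x) (G.disIn A y) (G.pre r T))

/-- The ordered local Markov property with respect to a total vertex order `r` : for every
vertex `x` and every ancestrally closed `A` with `x ∈ A ⊆ pre_{G,≺}(x)`,
`{x} ⫫ A \ (mb(x,A) ∪ {x}) | mb(x,A)`. -/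
def OrderedLocalMarkov (r : V → V → Prop) : Prop :=
  ∀ (x : V) (A : Set V), G.ancSet A = A → x ∈ A → A ⊆ {v | r v x ∨ v = x} →
    I {x} (A \ (G.mb x A ∪ {x})) (G.mb x A)

/-- The alternative local Markov property: for every vertex `v`,
`{v} ⫫ nd(v) \ bd(v) | pa_G(v)`. -/
def AltLocalMarkov : Prop :=
  ∀ v : V, I {v} (G.nd v \ G.bd v) (G.pa v)

end IndepModel

section Probability

variable {V : Type u} [Fintype V] [DecidableEq V] {S : V → Type} [∀ v, Fintype (S v)]

/-- The marginal of a pmf `p` on `∏ v, S v` over the coordinates in `A`, evaluated at the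
configuration `x` : the sum of `p` over all configurations agreeing with `x` on `A`. -/
noncomputable def marginal (p : (∀ v, S v) → ℝ) (A : Set V) (x : ∀ v, S v) : ℝ :=
  ∑ y : ∀ v, S v, if ∀ v ∈ A, y v = x v then p y else 0

/-- Conditional independence of the coordinate tuples on `X` and on `Y` given those on
`Z`, under the pmf `p` : `p_{X∪Y∪Z}(x) · p_Z(x) = p_{X∪Z}(x) · p_{Y∪Z}(x)` for all `x`. -/
def CondIndep (p : (∀ v, S v) → ℝ) (X Y Z : Set V) : Prop :=
  ∀ x : ∀ v, S v,
    marginal p (X ∪ Y ∪ Z) x * marginal p Z x = marginal p (X ∪ Z) x * marginal p (Y ∪ Z) x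

end Probability

section AuxGraph

variable {V : Type u}

/-- One step in the "mixed" walk relation: a directed or bidirected edge. -/
private def GStep (G : MixedGraph V) (u v : V) : Prop := G.dir u v ∨ G.bi u v

private lemma walk_of_rtg {r : V → V → Prop} {u v : V} (h : Relation.ReflTransGen r u v) :
    ∃ n, ∃ f : ℕ → V, f 0 = u ∧ f n = v ∧ ∀ i, i < n → r (f i) (f (i + 1)) := by
  induction h with
  | refl => exact ⟨0, fun _ => u, rfl, rfl, fun i hi => absurd hi (Nat.not_lt_zero i)⟩
  | @tail b c hab hbc ih =>
    obtain ⟨n, f, h0, hn, hstep⟩ := ih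
    refine ⟨n + 1, fun k => if k = n + 1 then c else f k, ?_, ?_, ?_⟩
    · simp [h0]
    · simp
    · intro i hi
      by_cases h : i = n
      · subst h
        simp only [if_neg (by omega : ¬ i = i + 1), if_pos rfl]
        rw [hn]; exact hbc
      · simp only [if_neg (by omega : ¬ i = n + 1), if_neg (by omega : ¬ i + 1 = n + 1)]
        exact hstep i (by omega)

private lemma no_closed_walk_dir {G : MixedGraph V} (hG : G.IsMVR) :
    ∀ m : ℕ, ∀ f : ℕ → V, f m = f 0 →
      (∀ i, i < m → GStep G (f i) (f (i + 1))) →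
      ∀ d, d < m → G.dir (f d) (f (d + 1)) → False := by
  intro m
  induction m using Nat.strong_induction_on with
  | _ m IH =>
  intro f hclose hstep d hd hdir
  by_cases hrep : ∃ i j, i < j ∧ j ≤ m ∧ (0 < i ∨ j < m) ∧ f i = f j
  · obtain ⟨i, j, hij, hjm, hne, heq⟩ := hrep
    by_cases hdij : i ≤ d ∧ d < j
    · -- recurse on the inner closed walk f i, …, f j
      refine IH (j - i) (by omega) (fun k => f (i + k)) ?_ ?_ (d - i) (by omega) ?_
      · show f (i + (j - i)) = f (i + 0)
        rw [show i + (j - i) = j from by omega, show i + 0 = i from rfl]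
        exact heq.symm
      · intro k hk
        have := hstep (i + k) (by omega)
        rwa [show i + k + 1 = i + (k + 1) from by omega] at this
      · show G.dir (f (i + (d - i))) (f (i + (d - i + 1)))
        rw [show i + (d - i) = d from by omega, show i + (d - i + 1) = d + 1 from by omega]
        exact hdir
    · -- recurse on the outer closed walk f 0, …, f i = f j, …, f m
      have hil : i ≤ m - (j - i) := by omega
      refine IH (m - (j - i)) (by omega)
        (fun k => if k ≤ i then f k else f (k + (j - i))) ?_ ?_
        (if d < i then d else d - (j - i)) ?_ ?_
      · by_cases h : m - (j - i) ≤ i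
        · have h1 : m - (j - i) = i := by omega
          have h2 : j = m := by omega
          simp only [if_pos h, if_pos (Nat.zero_le i)]
          rw [h1, heq, h2, hclose]
        · simp only [if_neg h, if_pos (Nat.zero_le i)]
          rw [show m - (j - i) + (j - i) = m from by omega, hclose]
      · intro k hk
        by_cases h1 : k + 1 ≤ i
        · simp only [if_pos (by omega : k ≤ i), if_pos h1]
          exact hstep k (by omega)
        · by_cases h2 : k ≤ i
          · have hki : k = i := by omega
            simp only [if_pos h2, if_neg h1]
            rw [hki, heq, show i + 1 + (j - i) = j + 1 from by omega]
            exact hstep j (by omega)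
          · simp only [if_neg h2, if_neg (by omega : ¬ k + 1 ≤ i)]
            have := hstep (k + (j - i)) (by omega)
            rwa [show k + (j - i) + 1 = k + 1 + (j - i) from by omega] at this
      · by_cases h : d < i
        · simp only [if_pos h]; omega
        · simp only [if_neg h]; omega
      · have hcase : d < i ∨ j ≤ d := by omega
        by_cases h : d < i
        · simp only [if_pos h, if_pos (by omega : d ≤ i), if_pos (by omega : d + 1 ≤ i)]
          exact hdir
        · have hjd : j ≤ d := by omega
          simp only [if_neg h]
          by_cases h2 : d - (j - i) ≤ i
          · have hdj : d = j := by omega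
            have hk : d - (j - i) = i := by omega
            rw [hk]
            simp only [if_pos le_rfl, if_neg (by omega : ¬ i + 1 ≤ i)]
            rw [heq, show i + 1 + (j - i) = j + 1 from by omega, ← hdj]
            exact hdir
          · simp only [if_neg h2, if_neg (by omega : ¬ d - (j - i) + 1 ≤ i)]
            rw [show d - (j - i) + (j - i) = d from by omega,
              show d - (j - i) + 1 + (j - i) = d + 1 from by omega]
            exact hdir
  · -- no nontrivial repetition: this is a partially directed cycle
    push_neg at hrep
    by_cases hm1 : m = 1
    · subst hm1
      have h1 : d = 0 := by omega
      subst h1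
      rw [hclose] at hdir
      exact hG.1.2.2.1 _ hdir
    · have hm2 : 2 ≤ m := by omega
      refine hG.2 ⟨m, f, hm2, hclose, ?_, fun i hi => hstep i hi, ⟨d, hd, hdir⟩⟩
      intro a b ha hb hab
      rcases Nat.lt_trichotomy a b with h | h | h
      · exact absurd hab (hrep a b h (by omega) (Or.inr hb))
      · exact h
      · exact absurd hab.symm (hrep b a h (by omega) (Or.inr ha))

private lemma no_dir_cycle {G : MixedGraph V} (hG : G.IsMVR) {a b : V}
    (hd : G.dir a b) (hr : Relation.ReflTransGen (GStep G) b a) : False := by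
  obtain ⟨n, f, h0, hn, hstep⟩ := walk_of_rtg hr
  refine no_closed_walk_dir hG (n + 1) (fun k => if k = 0 then a else f (k - 1))
    ?_ ?_ 0 (by omega) ?_
  · simp only [if_neg (by omega : ¬ n + 1 = 0)]
    rw [show n + 1 - 1 = n from by omega, hn]
    simp
  · intro i hi
    by_cases h : i = 0
    · subst h
      simp only [if_pos rfl, if_neg (by omega : ¬ (0 : ℕ) + 1 = 0)]
      rw [show (0 : ℕ) + 1 - 1 = 0 from rfl, h0]
      exact Or.inl hd
    · simp only [if_neg h, if_neg (by omega : ¬ i + 1 = 0)]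
      have := hstep (i - 1) (by omega)
      rwa [show i - 1 + 1 = i + 1 - 1 from by omega] at this
  · simp only [if_pos rfl, if_neg (by omega : ¬ (0 : ℕ) + 1 = 0)]
    rw [show (0 : ℕ) + 1 - 1 = 0 from rfl, h0]
    exact hd

end AuxGraph

section AuxComp

variable {V : Type u} {G : MixedGraph V}

private lemma biConn_symm (hG : G.IsMVR) {u v : V} (h : G.biConn u v) : G.biConn v u :=
  by
    unfold MixedGraph.biConn at h ⊢
    induction h with
    | refl => exact Relation.ReflTransGen.refl
    | tail _ hb ih => exact Relation.ReflTransGen.head (hG.1.1 _ _ hb) ih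

private lemma mem_chainComp_self (G : MixedGraph V) (v : V) : v ∈ G.chainComp v :=
  Relation.ReflTransGen.refl

private lemma chainComp_eq_of_mem (hG : G.IsMVR) {u v : V} (h : u ∈ G.chainComp v) :
    G.chainComp v = G.chainComp u := by
  ext w
  constructor
  · intro hw
    exact Relation.ReflTransGen.trans (biConn_symm hG h) hw
  · intro hw
    exact Relation.ReflTransGen.trans h hw

private lemma chainComp_eq_of_mem_both (hG : G.IsMVR) {a b w : V}
    (ha : w ∈ G.chainComp a) (hb : w ∈ G.chainComp b) : G.chainComp a = G.chainComp b := by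
  rw [chainComp_eq_of_mem hG ha, chainComp_eq_of_mem hG hb]

private lemma bi_mem_chainComp (hG : G.IsMVR) {v a b : V} (ha : a ∈ G.chainComp v)
    (hb : G.bi a b) : b ∈ G.chainComp v :=
  Relation.ReflTransGen.tail ha hb

private lemma biConn_within (hG : G.IsMVR) {v a b : V} (ha : a ∈ G.chainComp v)
    (hb : b ∈ G.chainComp v) : G.biConn a b :=
  Relation.ReflTransGen.trans (biConn_symm hG ha) hb

private lemma reach_of_biConn {u v : V} (h : G.biConn u v) :
    Relation.ReflTransGen (GStep G) u v :=
  by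
    unfold MixedGraph.biConn at h
    induction h with
    | refl => exact Relation.ReflTransGen.refl
    | tail _ hb ih => exact ih.tail (Or.inr hb)

private lemma reach_of_anc {u v : V} (h : G.anc u v) :
    Relation.ReflTransGen (GStep G) u v :=
  by
    unfold MixedGraph.anc at h
    induction h with
    | refl => exact Relation.ReflTransGen.refl
    | tail _ hb ih => exact ih.tail (Or.inl hb)

/-- A mixed walk either stays bidirected or contains a directed edge. -/
private lemma reach_decomp {u w : V} (h : Relation.ReflTransGen (GStep G) u w) :
    G.biConn u w ∨ ∃ a b, G.dir a b ∧ Relation.ReflTransGen (GStep G) u a ∧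
      Relation.ReflTransGen (GStep G) b w := by
  induction h with
  | refl => exact Or.inl Relation.ReflTransGen.refl
  | @tail c e hc hce ih =>
    rcases hce with hdir | hbi
    · exact Or.inr ⟨c, e, hdir, hc, Relation.ReflTransGen.refl⟩
    · rcases ih with hb | ⟨a, b, hdir, h1, h2⟩
      · exact Or.inl (hb.tail hbi)
      · exact Or.inr ⟨a, b, hdir, h1, h2.tail (Or.inr hbi)⟩

/-- Two distinct chain components cannot mixed-reach each other in both directions. -/
private lemma no_back_reach (hG : G.IsMVR) {v v' : V} (hne : G.chainComp v ≠ G.chainComp v')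
    {u w u' w' : V} (hu : u ∈ G.chainComp v) (hw : w ∈ G.chainComp v')
    (hu' : u' ∈ G.chainComp v') (hw' : w' ∈ G.chainComp v)
    (h1 : Relation.ReflTransGen (GStep G) u w)
    (h2 : Relation.ReflTransGen (GStep G) u' w') : False := by
  rcases reach_decomp h1 with hb | ⟨a, b, hdir, hua, hbw⟩
  · have hwv : w ∈ G.chainComp v := by
      rw [chainComp_eq_of_mem hG hu]; exact hb
    exact hne (chainComp_eq_of_mem_both hG hwv hw)
  · exact no_dir_cycle hG hdir
      (((hbw.trans (reach_of_biConn (biConn_within hG hw hu'))).trans h2).trans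
        ((reach_of_biConn (biConn_within hG hw' hu)).trans hua))

end AuxComp

section AuxMSep

variable {V : Type u} {G : MixedGraph V}

/-- The key separation: a chain component `T` is m-separated from the rest of an
ancestrally closed set from which `T` reaches nothing, given `pa(T)`. -/
private lemma msep_comp (hG : G.IsMVR) {U : Set V} (v₀ : V)
    (hmax : ∀ u ∈ G.chainComp v₀, ∀ w ∈ U, w ∉ G.chainComp v₀ →
      ¬ Relation.ReflTransGen (GStep G) u w) :
    G.MSep (G.chainComp v₀) ((U \ G.chainComp v₀) \ G.paSet (G.chainComp v₀))
      (G.paSet (G.chainComp v₀)) := by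
  set T := G.chainComp v₀ with hT
  rintro α hα β ⟨⟨hβU, hβT⟩, hβZ⟩ ⟨n, f, ⟨hwalk, hinj⟩, hf0, hfn, hmc⟩
  have hfnT : f n ∉ T := by rw [hfn]; exact hβT
  have hex : ∃ i, f i ∉ T := ⟨n, hfnT⟩
  set i := Nat.find hex with hidef
  have hiT : f i ∉ T := Nat.find_spec hex
  have hin : i ≤ n := Nat.find_min' hex hfnT
  have hipos : 0 < i := by
    rcases Nat.eq_zero_or_pos i with h | h
    · exfalso; apply hiT; rw [h, hf0]; exact hα
    · exact h
  have hprev : f (i - 1) ∈ T := by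
    by_contra h
    have := Nat.find_min' hex h
    omega
  have hadj := hwalk (i - 1) (by omega)
  rw [show i - 1 + 1 = i from by omega] at hadj
  rcases hadj with hAB | hBA | hbi
  · -- the path leaves `T` through an outgoing directed edge: it must keep going up
    have key : ∀ k, i ≤ k → k ≤ n →
        G.dir (f (k - 1)) (f k) ∧ Relation.ReflTransGen (GStep G) (f i) (f k) := by
      intro k hk
      induction k, hk using Nat.le_induction with
      | base => exact fun _ => ⟨hAB, Relation.ReflTransGen.refl⟩
      | succ k hk IHk =>
        intro hk1
        obtain ⟨hdk, hrk⟩ := IHk (by omega)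
        have hkn : k < n := by omega
        have hnc : ¬ G.IsColliderAt f k := by
          intro hcol
          obtain ⟨z, ⟨hzT, t, htT, hdzt⟩, hancz⟩ := (hmc k (by omega) hkn).1 hcol
          exact no_dir_cycle hG hAB
            (((hrk.trans (reach_of_anc hancz)).tail (Or.inl hdzt)).trans
              (reach_of_biConn (biConn_within hG htT hprev)))
        have h2 : ¬ (G.dir (f (k + 1)) (f k) ∨ G.bi (f k) (f (k + 1))) := fun hh =>
          hnc ⟨Or.inl hdk, hh⟩
        rcases hwalk k hkn with h | h | h
        · exact ⟨by simpa using h, hrk.tail (Or.inl h)⟩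
        · exact absurd (Or.inl h) h2
        · exact absurd (Or.inr h) h2
    obtain ⟨-, hreach⟩ := key n hin le_rfl
    have hfull : Relation.ReflTransGen (GStep G) (f (i - 1)) β := by
      rw [← hfn]
      exact (Relation.ReflTransGen.single (show GStep G (f (i-1)) (f i) from Or.inl hAB)).trans hreach
    exact hmax (f (i - 1)) hprev β hβU hβT hfull
  · -- the path leaves `T` through an incoming directed edge: a parent of `T`
    have hfiZ : f i ∈ G.paSet T := ⟨hiT, f (i - 1), hprev, hBA⟩
    rcases eq_or_lt_of_le hin with h | h
    · apply hβZ
      rw [← hfn, ← h]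
      exact hfiZ
    · have hnc : ¬ G.IsColliderAt f i := by
        rintro ⟨h1, -⟩
        rcases h1 with hd' | hb'
        · exact hG.1.2.2.2.2 _ _ hBA hd'
        · exact hiT (bi_mem_chainComp hG hprev hb')
      exact (hmc i hipos h).2 hnc hfiZ
  · exact hiT (bi_mem_chainComp hG hprev hbi)

end AuxMSep

section AuxMax

variable {V : Type u}

private def MGCompRel (G : MixedGraph V) (T T' : Set V) : Prop :=
  T ≠ T' ∧ ∃ u ∈ T, ∃ w ∈ T', Relation.ReflTransGen (GStep G) u w

private lemma compRel_trans {G : MixedGraph V} (hG : G.IsMVR) {T T' T'' : Set V}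
    (h1 : ∃ v, T = G.chainComp v) (h2 : ∃ v, T' = G.chainComp v)
    (h3 : ∃ v, T'' = G.chainComp v)
    (r1 : MGCompRel G T T') (r2 : MGCompRel G T' T'') : MGCompRel G T T'' := by
  obtain ⟨v1, rfl⟩ := h1
  obtain ⟨v2, rfl⟩ := h2
  obtain ⟨v3, rfl⟩ := h3
  obtain ⟨hne1, u, hu, w, hw, hr1⟩ := r1
  obtain ⟨hne2, u', hu', w'', hw'', hr2⟩ := r2
  refine ⟨?_, u, hu, w'', hw'', hr1.trans ((reach_of_biConn (biConn_within hG hw hu')).trans hr2)⟩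
  intro heq
  rw [heq] at hne1 hu
  exact no_back_reach hG hne1 hu hw hu' hw'' hr1 hr2

private lemma exists_maximal_comp [Fintype V] {G : MixedGraph V} (hG : G.IsMVR)
    (𝒮 : Finset (Set V)) (hcomp : ∀ T ∈ 𝒮, ∃ v, T = G.chainComp v) (hne : 𝒮.Nonempty) :
    ∃ T ∈ 𝒮, ∀ T' ∈ 𝒮, ¬ MGCompRel G T T' := by
  obtain ⟨T, hT, hmin⟩ := Finset.exists_min_image 𝒮
    (fun T => (𝒮.filter (fun T' => MGCompRel G T T')).card) hne
  refine ⟨T, hT, fun T' hT' hrel => ?_⟩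
  have hsub : 𝒮.filter (fun T'' => MGCompRel G T' T'') ⊆ 𝒮.filter (fun T'' => MGCompRel G T T'') := by
    intro T'' hmem
    rw [Finset.mem_filter] at hmem ⊢
    exact ⟨hmem.1, compRel_trans hG (hcomp T hT) (hcomp T' hT') (hcomp T'' hmem.1) hrel hmem.2⟩
  have hss : 𝒮.filter (fun T'' => MGCompRel G T' T'') ⊂ 𝒮.filter (fun T'' => MGCompRel G T T'') := by
    rw [Finset.ssubset_iff_of_subset hsub]
    refine ⟨T', ?_, ?_⟩
    · rw [Finset.mem_filter]; exact ⟨hT', hrel⟩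
    · rw [Finset.mem_filter]
      rintro ⟨-, hne', -⟩
      exact hne' rfl
  have := Finset.card_lt_card hss
  have := hmin T' hT'
  omega

end AuxMax

section AuxProb

variable {V : Type u} [Fintype V] [DecidableEq V] {S : V → Type} [∀ v, Fintype (S v)]

private lemma marginal_pos {p : (∀ v, S v) → ℝ} (hpos : ∀ x, 0 < p x) (A : Set V)
    (x : ∀ v, S v) : 0 < marginal p A x := by
  have h1 : p x ≤ marginal p A x := by
    have := Finset.single_le_sum (f := fun y : ∀ v, S v => if ∀ v ∈ A, y v = x v then p y else 0)
      (fun i _ => by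
        by_cases h : ∀ v ∈ A, i v = x v
        · rw [if_pos h]; exact (hpos i).le
        · rw [if_neg h])
      (Finset.mem_univ x)
    simpa [marginal] using this
  linarith [hpos x]

private lemma marginal_empty {p : (∀ v, S v) → ℝ} (hsum : ∑ x : ∀ v, S v, p x = 1)
    (x : ∀ v, S v) : marginal p (∅ : Set V) x = 1 := by
  unfold marginal
  rw [Finset.sum_congr rfl (fun y _ => ?_), hsum]
  rw [if_pos]
  intro v hv
  exact absurd hv (Set.notMem_empty v)

private lemma marginal_univ {p : (∀ v, S v) → ℝ} (x : ∀ v, S v) :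
    marginal p (Set.univ : Set V) x = p x := by
  unfold marginal
  have h2 : (∑ y : ∀ v, S v, if y = x then p y else 0) = p x := by
    rw [Finset.sum_ite_eq' Finset.univ x p]
    simp
  refine Eq.trans (Finset.sum_congr rfl fun y _ => ?_) h2
  by_cases h : y = x
  · rw [if_pos (show ∀ v ∈ (Set.univ : Set V), y v = x v from fun v _ => congrFun h v),
      if_pos h]
  · rw [if_neg (show ¬ ∀ v ∈ (Set.univ : Set V), y v = x v from
      fun hh => h (funext fun v => hh v trivial)), if_neg h]

end AuxProb

section Main

variable {V : Type u} [Fintype V] [DecidableEq V] {S : V → Type} [∀ v, Fintype (S v)]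

private lemma factor_aux {G : MixedGraph V} (hG : G.IsMVR)
    {p : (∀ v, S v) → ℝ} (hpos : ∀ x, 0 < p x) (hsum : ∑ x : ∀ v, S v, p x = 1)
    (hglobal : GlobalMarkovM (fun X Y Z => CondIndep p X Y Z) G) :
    ∀ 𝒮 : Finset (Set V), (∀ T ∈ 𝒮, ∃ v, T = G.chainComp v) →
      (∀ w u, Relation.ReflTransGen (GStep G) w u → u ∈ {v | ∃ T ∈ 𝒮, v ∈ T} →
        w ∈ {v | ∃ T ∈ 𝒮, v ∈ T}) →
      ∀ x, marginal p {v | ∃ T ∈ 𝒮, v ∈ T} x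
        = ∏ T ∈ 𝒮, marginal p (T ∪ G.paSet T) x / marginal p (G.paSet T) x := by
  intro 𝒮
  induction 𝒮 using Finset.strongInduction with
  | _ 𝒮 IH =>
  intro hcomp hanc x
  rcases Finset.eq_empty_or_nonempty 𝒮 with rfl | hne
  · have hUe : {v : V | ∃ T ∈ (∅ : Finset (Set V)), v ∈ T} = (∅ : Set V) := by simp
    rw [hUe, Finset.prod_empty, marginal_empty hsum]
  · obtain ⟨T, hT, hmaxT⟩ := exists_maximal_comp hG 𝒮 hcomp hne
    obtain ⟨v₀, hTv⟩ := hcomp T hT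
    set U : Set V := {v | ∃ T ∈ 𝒮, v ∈ T} with hUdef
    have hdisjT : ∀ T' ∈ 𝒮, T' ≠ T → ∀ w, w ∈ T' → w ∉ T := by
      intro T' hT' hne' w hw hwT
      obtain ⟨v', hT'v⟩ := hcomp T' hT'
      refine hne' ?_
      rw [hT'v, hTv]
      exact chainComp_eq_of_mem_both hG (by rw [← hT'v]; exact hw) (by rw [← hTv]; exact hwT)
    have hU'eq : {v : V | ∃ T' ∈ 𝒮.erase T, v ∈ T'} = U \ T := by
      ext w
      constructor
      · rintro ⟨T', hT', hw⟩
        rw [Finset.mem_erase] at hT'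
        exact ⟨⟨T', hT'.2, hw⟩, hdisjT T' hT'.2 hT'.1 w hw⟩
      · rintro ⟨⟨T', hT', hw⟩, hwT⟩
        refine ⟨T', Finset.mem_erase.2 ⟨?_, hT'⟩, hw⟩
        rintro rfl
        exact hwT hw
    have hTU : T ⊆ U := fun w hw => ⟨T, hT, hw⟩
    have hmax' : ∀ u ∈ T, ∀ w ∈ U, w ∉ T → ¬ Relation.ReflTransGen (GStep G) u w := by
      rintro u hu w ⟨T', hT', hw⟩ hwT hr
      refine hmaxT T' hT' ⟨?_, u, hu, w, hw, hr⟩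
      rintro rfl
      exact hwT hw
    have hZsub : G.paSet T ⊆ U \ T := by
      rintro z ⟨hzT, t, htT, hdzt⟩
      exact ⟨hanc z t (Relation.ReflTransGen.single (Or.inl hdzt)) (hTU htT), hzT⟩
    have hCI : CondIndep p T ((U \ T) \ G.paSet T) (G.paSet T) := by
      by_cases hYne : ((U \ T) \ G.paSet T).Nonempty
      · refine hglobal _ _ _ ⟨v₀, by rw [hTv]; exact mem_chainComp_self G v₀⟩ hYne ?_ ?_ ?_ ?_
        · rw [Set.disjoint_left]; rintro a haT ⟨⟨-, haT'⟩, -⟩; exact haT' haT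
        · rw [Set.disjoint_left]; rintro a haT ⟨haT', -⟩; exact haT' haT
        · rw [Set.disjoint_left]; rintro a ⟨-, haZ⟩ h; exact haZ h
        · rw [hTv] at hmax' ⊢
          exact msep_comp hG v₀ hmax'
      · rw [Set.not_nonempty_iff_eq_empty] at hYne
        rw [hYne]
        intro y
        rw [Set.union_empty, Set.empty_union]
    have hset1 : T ∪ ((U \ T) \ G.paSet T) ∪ G.paSet T = U := by
      rw [Set.union_assoc, Set.diff_union_of_subset hZsub, Set.union_diff_cancel hTU]
    have hset2 : ((U \ T) \ G.paSet T) ∪ G.paSet T = U \ T :=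
      Set.diff_union_of_subset hZsub
    have hkey := hCI x
    rw [hset1, hset2] at hkey
    have hanc' : ∀ w u, Relation.ReflTransGen (GStep G) w u →
        u ∈ {v : V | ∃ T' ∈ 𝒮.erase T, v ∈ T'} → w ∈ {v : V | ∃ T' ∈ 𝒮.erase T, v ∈ T'} := by
      intro w u hr hu
      rw [hU'eq] at hu ⊢
      have hwU : w ∈ U := hanc w u hr hu.1
      refine ⟨hwU, fun hwT => ?_⟩
      exact hmax' w hwT u hu.1 hu.2 hr
    have hIH := IH (𝒮.erase T) (Finset.erase_ssubset hT)
      (fun T' hT' => hcomp T' (Finset.mem_erase.1 hT').2) hanc' x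
    rw [hU'eq] at hIH
    have hprod : (∏ T' ∈ 𝒮, marginal p (T' ∪ G.paSet T') x / marginal p (G.paSet T') x)
        = (marginal p (T ∪ G.paSet T) x / marginal p (G.paSet T) x)
          * ∏ T' ∈ 𝒮.erase T, marginal p (T' ∪ G.paSet T') x / marginal p (G.paSet T') x :=
      (Finset.mul_prod_erase 𝒮 _ hT).symm
    rw [hprod, ← hIH]
    have hZpos := marginal_pos hpos (G.paSet T) x
    field_simp
    linear_combination hkey

end Main

/-- Let `G` be an MVR chain graph on a finite vertex set `V` and `p` a
strictly positive pmf on the finite product space `∏ v, S v`. If `p` obeys the global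
Markov property for `G` (m-separation implies conditional independence), then `p`
factorizes over the chain components with their graphical parents:
`p(x) = ∏_{T ∈ 𝒯} p_{T ∪ pa_G(T)}(x) / p_{pa_G(T)}(x)`. -/
theorem factorization_over_chain_components {V : Type u} [Fintype V] [DecidableEq V]
    (G : MixedGraph V) (hG : G.IsMVR)
    (S : V → Type) [∀ v, Fintype (S v)] [∀ v, Nonempty (S v)]
    (p : (∀ v, S v) → ℝ) (hpos : ∀ x, 0 < p x) (hsum : ∑ x : ∀ v, S v, p x = 1)
    (hglobal : GlobalMarkovM (fun X Y Z => CondIndep p X Y Z) G) :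
    ∀ x : ∀ v, S v,
      p x = ∏ T ∈ Finset.univ.image (fun v => G.chainComp v),
        marginal p (T ∪ G.paSet T) x / marginal p (G.paSet T) x := by
  intro x
  have hcomp : ∀ T ∈ Finset.univ.image (fun v => G.chainComp v), ∃ v, T = G.chainComp v := by
    intro T hT
    obtain ⟨v, -, rfl⟩ := Finset.mem_image.1 hT
    exact ⟨v, rfl⟩
  have huniv : {v : V | ∃ T ∈ Finset.univ.image (fun v => G.chainComp v), v ∈ T}
      = (Set.univ : Set V) := by
    ext w
    simp only [Set.mem_univ, iff_true, Set.mem_setOf_eq]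
    exact ⟨G.chainComp w, Finset.mem_image.2 ⟨w, Finset.mem_univ w, rfl⟩, mem_chainComp_self G w⟩
  have h := factor_aux hG hpos hsum hglobal (Finset.univ.image (fun v => G.chainComp v)) hcomp
    (fun w u _ _ => by rw [huniv]; trivial) x
  rw [huniv, marginal_univ] at h
  exact h
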